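/- Let G be a connected simple graph on a finite vertex type V and let H be a spanning tree of G (a connected acyclic spanning subgraph). If E and E' are additive no-arbitrage matrices over G such that E i j = E' i j for every edge (i, j) of H, then E = E'. That is, a no-arbitrage exchange matrix over a connected graph is uniquely determined by its values on the edges of a spanning tree. -/

import Mathlib

/-- The sum of `E` over the consecutive edge steps of a walk `w` in `G`:
`∑_{i < length w} E v_i v_{i+1}`. -/
def walkSum {V : Type*} {G : SimpleGraph V} (E : V → V → ℝ) {u v : V} (w : G.Walk u v) : ℝ :=
  ∑ i ∈ Finset.range w.length, E (w.getVert i) (w.getVert (i + 1))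

/-- `E` is an additive no-arbitrage matrix over `G`: it vanishes on non-adjacent pairs and
its sum over the steps of every closed walk is zero. -/
def IsNoArbitrage {V : Type*} (G : SimpleGraph V) (E : V → V → ℝ) : Prop :=
  (∀ i j, ¬ G.Adj i j → E i j = 0) ∧ ∀ (v : V) (w : G.Walk v v), walkSum E w = 0

lemma getVert_map_aux {V : Type*} {G G' : SimpleGraph V} (f : G →g G') {u v : V}
    (w : G.Walk u v) (i : ℕ) : (w.map f).getVert i = f (w.getVert i) := by
  induction w generalizing i with
  | nil => simp [SimpleGraph.Walk.getVert]
  | cons h p ih =>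
    cases i with
    | zero => simp [SimpleGraph.Walk.getVert]
    | succ n => simpa [SimpleGraph.Walk.getVert] using ih n

lemma walkSum_cons {V : Type*} {G : SimpleGraph V} (E : V → V → ℝ) {u v x : V}
    (h : G.Adj u v) (p : G.Walk v x) :
    walkSum E (SimpleGraph.Walk.cons h p) = E u v + walkSum E p := by
  unfold walkSum
  rw [SimpleGraph.Walk.length_cons, Finset.sum_range_succ']
  simp [SimpleGraph.Walk.getVert, add_comm]

/-- A no-arbitrage matrix over a connected graph is uniquely determined by its values on
the edges of a spanning tree. -/
theorem no_arbitrage_spanning_tree_determines {V : Type*} [Fintype V]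
    (G H : SimpleGraph V) (hG : G.Connected)
    (hle : H ≤ G) (hconn : H.Connected) (hac : H.IsAcyclic)
    (E E' : V → V → ℝ)
    (hE : IsNoArbitrage G E) (hE' : IsNoArbitrage G E')
    (hagree : ∀ i j, H.Adj i j → E i j = E' i j) :
    E = E' := by
  funext i j
  by_cases hadj : G.Adj i j
  · -- take a walk in H from j to i
    obtain ⟨p⟩ := hconn j i
    let q : G.Walk j i := p.mapLe hle
    have key : ∀ F : V → V → ℝ, IsNoArbitrage G F → F i j = - walkSum F q := by
      intro F hF
      have h0 := hF.2 i (SimpleGraph.Walk.cons hadj q)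
      rw [walkSum_cons] at h0
      linarith
    have hq : walkSum E q = walkSum E' q := by
      unfold walkSum
      apply Finset.sum_congr rfl
      intro k hk
      simp only [Finset.mem_range] at hk
      have hk' : k < p.length := by
        simpa [q, SimpleGraph.Walk.mapLe] using hk
      have hHadj : H.Adj (p.getVert k) (p.getVert (k + 1)) :=
        p.adj_getVert_succ hk'
      have e1 : q.getVert k = p.getVert k := by
        exact getVert_map_aux (SimpleGraph.Hom.ofLE hle) p k
      have e2 : q.getVert (k + 1) = p.getVert (k + 1) := by
        exact getVert_map_aux (SimpleGraph.Hom.ofLE hle) p (k + 1)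
      rw [e1, e2]
      exact hagree _ _ hHadj
    rw [key E hE, key E' hE', hq]
  · rw [hE.1 i j hadj, hE'.1 i j hadj]
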